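/- For every real number δ with 0 < δ ≤ 1/2, the inequality ∫_{−π/2}^{π/2} (1 + δ·ξ(θ))^{−1/2} dθ ≥ π·(1 − δ)^{−1/2} holds. -/

import Mathlib

open Real Set Filter Topology

/-- The test function ξ(θ) = (cos²θ + 2θ·sinθ·cosθ + θ² − π²/4)/cos²θ. -/
noncomputable def xi (θ : ℝ) : ℝ :=
  (Real.cos θ ^ 2 + 2 * θ * Real.sin θ * Real.cos θ + θ ^ 2 - Real.pi ^ 2 / 4) /
    Real.cos θ ^ 2


lemma my_sin_ge_cubic {x : ℝ} (hx : 0 ≤ x) : x - x^3/6 ≤ Real.sin x := by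
  have h : ∀ y : ℝ, HasDerivAt (fun t => Real.sin t - (t - t^3/6))
      (Real.cos y - (1 - y^2/2)) y := by
    intro y
    have := (Real.hasDerivAt_sin y).sub (((hasDerivAt_id y).sub
      (((hasDerivAt_pow 3 y).div_const 6))))
    refine this.congr_deriv ?_
    norm_num
    ring
  have mono : MonotoneOn (fun t => Real.sin t - (t - t^3/6)) (Set.Ici 0) := by
    apply monotoneOn_of_deriv_nonneg (convex_Ici 0)
    · exact (Real.continuous_sin.sub (by continuity)).continuousOn
    · intro y hy
      exact (h y).differentiableAt.differentiableWithinAt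
    · intro y hy
      rw [(h y).deriv]
      nlinarith [Real.one_sub_sq_div_two_le_cos (x := y)]
  have := mono (Set.self_mem_Ici) hx hx
  simpa using this




lemma xi_even (θ : ℝ) : xi (-θ) = xi θ := by
  simp [xi, Real.sin_neg, Real.cos_neg]

lemma pieceA {θ : ℝ} (h0 : 0 ≤ θ) (hA : θ ≤ 0.95) :
    0 ≤ Real.cos θ ^ 2 + 2 * θ * Real.sin θ * Real.cos θ + θ ^ 2 - Real.pi ^ 2 / 4
      + (3/2) * Real.cos θ ^ 2 := by
  have hπu : Real.pi < 3.1416 := by linarith [Real.pi_lt_d6]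
  have hπ2 : Real.pi^2 < 9.8697 := by nlinarith [Real.pi_gt_three]
  have hs : θ - θ^3/6 ≤ Real.sin θ := my_sin_ge_cubic h0
  have hc : 1 - θ^2/2 ≤ Real.cos θ := Real.one_sub_sq_div_two_le_cos
  have hc0 : (0:ℝ) ≤ 1 - θ^2/2 := by nlinarith
  have hs0 : (0:ℝ) ≤ θ - θ^3/6 := by nlinarith
  have hsc : (θ - θ^3/6) * (1 - θ^2/2) ≤ Real.sin θ * Real.cos θ :=
    mul_le_mul hs hc hc0 (le_trans hs0 hs)
  have hc2 : (1 - θ^2/2)^2 ≤ Real.cos θ ^2 := by nlinarith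
  have hu : (0:ℝ) ≤ 0.9025 - θ^2 := by nlinarith
  have hpoly : 0 ≤ (1 - θ^2/2)^2 + 2*θ*((θ - θ^3/6) * (1 - θ^2/2)) + θ^2
      - Real.pi^2/4 + (3/2)*(1 - θ^2/2)^2 := by
    nlinarith [sq_nonneg θ, mul_nonneg hu (sq_nonneg θ), mul_nonneg (mul_nonneg hu hu) (sq_nonneg θ),
      mul_nonneg hu (mul_nonneg (sq_nonneg θ) (sq_nonneg θ)), mul_nonneg hu hu]
  nlinarith [mul_le_mul_of_nonneg_left hsc (by linarith : (0:ℝ) ≤ 2*θ)]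

lemma pieceB {u : ℝ} (hu0 : 0 ≤ u) (huu : u ≤ 0.6208) :
    0 ≤ (5/2) * Real.sin u^2 + (Real.pi - 2*u)*(Real.cos u * Real.sin u) + u^2 - Real.pi*u := by
  have hπu : Real.pi < 3.1416 := by linarith [Real.pi_lt_d6]
  have hπl : (3.1415:ℝ) < Real.pi := by linarith [Real.pi_gt_d6]
  have h1 : u - u^3/6 ≤ Real.sin u := my_sin_ge_cubic hu0
  have h2 : 1 - u^2/2 ≤ Real.cos u := Real.one_sub_sq_div_two_le_cos
  have h10 : (0:ℝ) ≤ u - u^3/6 := by nlinarith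
  have h20 : (0:ℝ) ≤ 1 - u^2/2 := by nlinarith
  have hprod : (1 - u^2/2) * (u - u^3/6) ≤ Real.cos u * Real.sin u :=
    mul_le_mul h2 h1 h10 (by nlinarith [Real.cos_le_one u])
  have hs2 : (u - u^3/6)^2 ≤ Real.sin u ^ 2 := by nlinarith
  have h6 : (0:ℝ) ≤ 0.6208 - u := by linarith
  have e3 : u^3 ≤ 0.6208*u^2 := by nlinarith [mul_nonneg (mul_nonneg h6 hu0) hu0]
  have e6 : u^6 ≤ 0.6208^4*u^2 := by
    nlinarith [mul_nonneg (mul_nonneg (mul_nonneg h6 hu0) hu0) (sq_nonneg u),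
      mul_nonneg (mul_nonneg h6 hu0) hu0, sq_nonneg u, mul_nonneg hu0 hu0]
  have e5 : (0:ℝ) ≤ Real.pi/12*u^5 := by positivity
  have hpoly : 0 ≤ (5/2)*(u - u^3/6)^2 + (Real.pi - 2*u)*((1 - u^2/2)*(u - u^3/6))
      + u^2 - Real.pi*u := by
    nlinarith [e3, e6, e5, mul_nonneg (mul_nonneg hu0 hu0) hu0, sq_nonneg u,
      mul_nonneg (mul_nonneg (le_of_lt (by linarith : (0:ℝ) < 3.1416 - Real.pi)) (mul_nonneg hu0 hu0)) hu0]
  have hlift : (Real.pi - 2*u)*((1 - u^2/2)*(u - u^3/6)) ≤ (Real.pi - 2*u)*(Real.cos u * Real.sin u) :=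
    mul_le_mul_of_nonneg_left hprod (by linarith)
  linarith [hpoly, hs2, hlift]

lemma key_nonneg {θ : ℝ} (h0 : 0 ≤ θ) (h1 : θ ≤ Real.pi/2) :
    0 ≤ Real.cos θ ^ 2 + 2 * θ * Real.sin θ * Real.cos θ + θ ^ 2 - Real.pi ^ 2 / 4
      + (3/2) * Real.cos θ ^ 2 := by
  rcases le_or_gt θ 0.95 with hA | hB
  · exact pieceA h0 hA
  · have hπu : Real.pi < 3.1416 := by linarith [Real.pi_lt_d6]
    have hcs : Real.cos θ = Real.sin (Real.pi/2 - θ) := (Real.sin_pi_div_two_sub θ).symm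
    have hsc : Real.sin θ = Real.cos (Real.pi/2 - θ) := (Real.cos_pi_div_two_sub θ).symm
    rw [hcs, hsc]
    have := pieceB (u := Real.pi/2 - θ) (by linarith) (by linarith)
    linarith [this]

lemma xi_lower {θ : ℝ} (h1 : -(Real.pi/2) ≤ θ) (h2 : θ ≤ Real.pi/2) : -(3/2) ≤ xi θ := by
  have main : ∀ x : ℝ, 0 ≤ x → x ≤ Real.pi/2 → -(3/2) ≤ xi x := by
    intro x hx0 hx1
    rcases eq_or_lt_of_le hx1 with he | hlt
    · simp [xi, he, Real.cos_pi_div_two]; norm_num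
    · have hc : 0 < Real.cos x := Real.cos_pos_of_mem_Ioo ⟨by linarith [Real.pi_pos], hlt⟩
      rw [xi, le_div_iff₀ (by positivity)]
      nlinarith [key_nonneg hx0 hx1]
  rcases le_or_gt 0 θ with h | h
  · exact main θ h h2
  · have := main (-θ) (by linarith) (by linarith)
    rwa [xi_even] at this



lemma xi_even' (θ : ℝ) : xi (-θ) = xi θ := by
  simp [xi, Real.sin_neg, Real.cos_neg]

lemma xi_upper {θ : ℝ} (h1 : -(Real.pi/2) ≤ θ) (h2 : θ ≤ Real.pi/2) : xi θ ≤ 0 := by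
  have main : ∀ x : ℝ, 0 ≤ x → x ≤ Real.pi/2 → xi x ≤ 0 := by
    intro x hx0 hx1
    have hc0 : 0 ≤ Real.cos x := Real.cos_nonneg_of_mem_Icc ⟨by linarith [Real.pi_pos], hx1⟩
    have hcb : Real.cos x ≤ Real.pi/2 - x := by
      rw [← Real.sin_pi_div_two_sub]
      exact Real.sin_le (by linarith)
    have hs1 : Real.sin x ≤ 1 := Real.sin_le_one x
    have hs0 : 0 ≤ Real.sin x := Real.sin_nonneg_of_nonneg_of_le_pi hx0 (by linarith [Real.pi_pos])
    have hN : Real.cos x ^ 2 + 2 * x * Real.sin x * Real.cos x + x ^ 2 - Real.pi ^ 2 / 4 ≤ 0 := by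
      nlinarith [mul_nonneg hx0 hc0]
    exact div_nonpos_of_nonpos_of_nonneg hN (sq_nonneg _)
  rcases le_or_gt 0 θ with h | h
  · exact main θ h h2
  · have := main (-θ) (by linarith) (by linarith)
    rwa [xi_even'] at this




lemma xi_measurable : Measurable xi := by
  apply Measurable.div <;> fun_prop

lemma intervalIntegrable_of_bound (f : ℝ → ℝ) (hf : Measurable f) (M : ℝ)
    (h : ∀ x ∈ Icc (-(Real.pi/2)) (Real.pi/2), |f x| ≤ M) :
    IntervalIntegrable f MeasureTheory.volume (-(Real.pi/2)) (Real.pi/2) := by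
  rw [intervalIntegrable_iff_integrableOn_Ioc_of_le (by linarith [Real.pi_pos])]
  apply MeasureTheory.Integrable.mono'
      (MeasureTheory.integrableOn_const (C := M) measure_Ioc_lt_top.ne)
  · exact hf.aestronglyMeasurable.restrict
  · rw [MeasureTheory.ae_restrict_iff' measurableSet_Ioc]
    apply MeasureTheory.ae_of_all
    intro x hx
    rw [Real.norm_eq_abs]
    exact h x ⟨le_of_lt hx.1, hx.2⟩

lemma xi_intervalIntegrable :
    IntervalIntegrable xi MeasureTheory.volume (-(Real.pi/2)) (Real.pi/2) := by
  apply intervalIntegrable_of_bound xi xi_measurable (3/2)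
  intro x hx
  have h1 := xi_lower hx.1 hx.2
  have h2 := xi_upper hx.1 hx.2
  rw [abs_le]
  constructor <;> linarith

noncomputable def FF (θ : ℝ) : ℝ := θ + (θ^2 - Real.pi^2/4) * (Real.sin θ / Real.cos θ)

lemma FF_hasDerivAt {x : ℝ} (hx : x ∈ Ioo (-(Real.pi/2)) (Real.pi/2)) :
    HasDerivAt FF (xi x) x := by
  have hc : 0 < Real.cos x := Real.cos_pos_of_mem_Ioo ⟨hx.1, hx.2⟩
  have h1 : HasDerivAt (fun θ : ℝ => θ^2 - Real.pi^2/4) (2*x) x := by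
    simpa using (hasDerivAt_pow 2 x).sub_const (Real.pi^2/4)
  have h2 : HasDerivAt (fun θ => Real.sin θ / Real.cos θ)
      ((Real.cos x * Real.cos x - Real.sin x * -Real.sin x) / Real.cos x ^ 2) x :=
    (Real.hasDerivAt_sin x).div (Real.hasDerivAt_cos x) (ne_of_gt hc)
  have h3 := (hasDerivAt_id x).add (h1.mul h2)
  have heq : xi x = 1 + ((2*x) * (Real.sin x / Real.cos x) + (x^2 - Real.pi^2/4) *
      ((Real.cos x * Real.cos x - Real.sin x * -Real.sin x) / Real.cos x ^ 2)) := by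
    have hs : Real.cos x * Real.cos x - Real.sin x * -Real.sin x = 1 := by
      linear_combination Real.sin_sq_add_cos_sq x
    rw [hs, xi]
    field_simp
    ring
  rw [heq]
  exact h3

lemma sin_div_self_tendsto : Tendsto (fun u : ℝ => u / Real.sin u) (𝓝[≠] 0) (𝓝 1) := by
  have h := hasDerivAt_iff_tendsto_slope.mp (Real.hasDerivAt_sin 0)
  rw [Real.cos_zero] at h
  have h2 : Tendsto (fun u : ℝ => Real.sin u / u) (𝓝[≠] 0) (𝓝 1) := by
    apply h.congr'
    filter_upwards [self_mem_nhdsWithin] with u hu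
    simp [slope, Real.sin_zero]
    ring
  simpa using h2.inv₀ one_ne_zero

lemma tendsto_FF_right : Tendsto FF (𝓝[<] (Real.pi/2)) (𝓝 (-(Real.pi/2))) := by
  have hm : Tendsto (fun θ : ℝ => Real.pi/2 - θ) (𝓝[<] (Real.pi/2)) (𝓝[≠] (0:ℝ)) := by
    apply tendsto_nhdsWithin_of_tendsto_nhds_of_eventually_within
    · have : Tendsto (fun θ : ℝ => Real.pi/2 - θ) (𝓝 (Real.pi/2)) (𝓝 (Real.pi/2 - Real.pi/2)) :=
        (tendsto_const_nhds.sub tendsto_id)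
      simpa using this.mono_left nhdsWithin_le_nhds
    · filter_upwards [self_mem_nhdsWithin] with θ (hθ : θ < Real.pi/2)
      simp only [mem_compl_iff, mem_singleton_iff]
      intro h
      have : θ = Real.pi/2 := by linarith [sub_eq_zero.mp h]
      linarith
  have hratio : Tendsto (fun θ : ℝ => (Real.pi/2 - θ) / Real.sin (Real.pi/2 - θ))
      (𝓝[<] (Real.pi/2)) (𝓝 1) := sin_div_self_tendsto.comp hm
  have hG : Tendsto (fun θ : ℝ => θ - (θ + Real.pi/2) * Real.sin θ *
      ((Real.pi/2 - θ) / Real.sin (Real.pi/2 - θ))) (𝓝[<] (Real.pi/2)) (𝓝 (-(Real.pi/2))) := by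
    have hid : Tendsto (fun θ : ℝ => θ) (𝓝[<] (Real.pi/2)) (𝓝 (Real.pi/2)) :=
      tendsto_id.mono_left nhdsWithin_le_nhds
    have hsin : Tendsto (fun θ : ℝ => Real.sin θ) (𝓝[<] (Real.pi/2)) (𝓝 1) := by
      have := (Real.continuous_sin.tendsto (Real.pi/2)).mono_left
        (nhdsWithin_le_nhds (s := Iio (Real.pi/2)))
      simpa [Real.sin_pi_div_two] using this
    have hadd : Tendsto (fun θ : ℝ => θ + Real.pi/2) (𝓝[<] (Real.pi/2))
        (𝓝 (Real.pi/2 + Real.pi/2)) := hid.add tendsto_const_nhds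
    have hmul1 : Tendsto (fun θ : ℝ => (θ + Real.pi/2) * Real.sin θ) (𝓝[<] (Real.pi/2))
        (𝓝 ((Real.pi/2 + Real.pi/2) * 1)) := hadd.mul hsin
    have hmul2 : Tendsto (fun θ : ℝ => (θ + Real.pi/2) * Real.sin θ *
        ((Real.pi/2 - θ) / Real.sin (Real.pi/2 - θ))) (𝓝[<] (Real.pi/2))
        (𝓝 ((Real.pi/2 + Real.pi/2) * 1 * 1)) := hmul1.mul hratio
    have hG0 := hid.sub hmul2
    have h2 : Real.pi/2 - (Real.pi/2 + Real.pi/2) * 1 * 1 = -(Real.pi/2) := by ring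
    rw [h2] at hG0
    exact hG0
  apply hG.congr'
  filter_upwards [Ioo_mem_nhdsLT_of_mem
    (show Real.pi/2 ∈ Ioc (0:ℝ) (Real.pi/2) from ⟨by linarith [Real.pi_pos], le_refl _⟩)]
    with θ hθ
  obtain ⟨h0, h1⟩ := hθ
  have hc : 0 < Real.cos θ := Real.cos_pos_of_mem_Ioo ⟨by linarith [Real.pi_pos], h1⟩
  have hcs : Real.sin (Real.pi/2 - θ) = Real.cos θ := Real.sin_pi_div_two_sub θ
  rw [FF, hcs]
  field_simp
  ring

lemma FF_odd (θ : ℝ) : FF (-θ) = -FF θ := by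
  simp [FF, Real.sin_neg, Real.cos_neg]
  ring

lemma tendsto_FF_left : Tendsto FF (𝓝[>] (-(Real.pi/2))) (𝓝 (Real.pi/2)) := by
  have hneg : Tendsto (fun θ : ℝ => -θ) (𝓝[>] (-(Real.pi/2))) (𝓝[<] (Real.pi/2)) := by
    apply tendsto_nhdsWithin_of_tendsto_nhds_of_eventually_within
    · have : Tendsto (fun θ : ℝ => -θ) (𝓝 (-(Real.pi/2))) (𝓝 (Real.pi/2)) := by
        simpa using (tendsto_id (x := 𝓝 (-(Real.pi/2)))).neg
      exact this.mono_left nhdsWithin_le_nhds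
    · filter_upwards [self_mem_nhdsWithin] with θ (hθ : -(Real.pi/2) < θ)
      simpa using by linarith
  have := (tendsto_FF_right.comp hneg).neg
  simp only [Function.comp] at this
  have h2 : Tendsto (fun θ : ℝ => -FF (-θ)) (𝓝[>] (-(Real.pi/2))) (𝓝 (Real.pi/2)) := by
    simpa using this
  apply h2.congr
  intro θ
  rw [FF_odd, neg_neg]

lemma integral_xi :
    ∫ θ in (-(Real.pi/2))..(Real.pi/2), xi θ = -Real.pi := by
  have h := intervalIntegral.integral_eq_sub_of_hasDerivAt_of_tendsto
    (f := FF) (f' := xi) (a := -(Real.pi/2)) (b := Real.pi/2)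
    (by linarith [Real.pi_pos]) (fun x hx => FF_hasDerivAt hx)
    xi_intervalIntegrable tendsto_FF_left tendsto_FF_right
  rw [h]; ring



lemma tangent_ineq' {s t : ℝ} (hs : 0 < s) (ht : 0 < t) :
    t⁻¹ - (s^2 - t^2) / (2 * t^2 * t) ≤ s⁻¹ := by
  rw [← sub_nonneg]
  have heq : s⁻¹ - (t⁻¹ - (s^2 - t^2) / (2 * t^2 * t))
      = ((s - t)^2 * (s + 2*t)) / (2 * t^3 * s) := by
    field_simp
    ring
  rw [heq]
  positivity

lemma rpow_neg_half_eq {y : ℝ} (hy : 0 ≤ y) : y ^ (-(1:ℝ)/2) = (Real.sqrt y)⁻¹ := by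
  rw [show (-(1:ℝ)/2) = -(1/2) by norm_num, Real.rpow_neg hy, ← Real.sqrt_eq_rpow]

theorem z_inv_sqrt_integral_full (δ : ℝ) (hδ0 : 0 < δ) (hδ1 : δ ≤ 1 / 2) :
    ∫ θ in (-(Real.pi / 2))..(Real.pi / 2), (1 + δ * xi θ) ^ (-(1 : ℝ) / 2) ≥
      Real.pi * (1 - δ) ^ (-(1 : ℝ) / 2) := by
  have hπ := Real.pi_pos
  have ha : 0 < 1 - δ := by linarith
  set a := 1 - δ with haa
  -- pointwise positivity of 1 + δ xi
  have hpos : ∀ θ ∈ Icc (-(Real.pi/2)) (Real.pi/2), (1/4 : ℝ) ≤ 1 + δ * xi θ := by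
    intro θ hθ
    have h1 := xi_lower hθ.1 hθ.2
    have h2 := xi_upper hθ.1 hθ.2
    nlinarith
  set C2 : ℝ := δ / (2 * a * Real.sqrt a) with hC2
  set g : ℝ → ℝ := fun θ => (Real.sqrt a)⁻¹ - C2 * (xi θ + 1) with hg
  have hptwise : ∀ θ ∈ Icc (-(Real.pi/2)) (Real.pi/2),
      g θ ≤ (1 + δ * xi θ) ^ (-(1:ℝ)/2) := by
    intro θ hθ
    have hy : (0:ℝ) < 1 + δ * xi θ := lt_of_lt_of_le (by norm_num) (hpos θ hθ)
    rw [rpow_neg_half_eq hy.le]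
    have h := tangent_ineq' (Real.sqrt_pos.mpr hy) (Real.sqrt_pos.mpr ha)
    rw [Real.sq_sqrt hy.le, Real.sq_sqrt ha.le] at h
    have heq : g θ = (Real.sqrt a)⁻¹
        - ((1 + δ * xi θ) - a) / (2 * a * Real.sqrt a) := by
      rw [hg, hC2, haa]; ring
    rw [heq]
    exact h
  have hf_int : IntervalIntegrable (fun θ => (1 + δ * xi θ) ^ (-(1:ℝ)/2))
      MeasureTheory.volume (-(Real.pi/2)) (Real.pi/2) := by
    apply intervalIntegrable_of_bound _
      ((measurable_const.add (measurable_const.mul xi_measurable)).pow_const _) 2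
    intro x hx
    have h14 := hpos x hx
    have hy : (0:ℝ) < 1 + δ * xi x := by linarith
    show |(1 + δ * xi x) ^ (-(1:ℝ)/2)| ≤ 2
    rw [rpow_neg_half_eq hy.le, abs_of_nonneg (by positivity)]
    rw [inv_le_comm₀ (Real.sqrt_pos.mpr hy) (by norm_num)]
    have h5 : Real.sqrt (1/4 : ℝ) ≤ Real.sqrt (1 + δ * xi x) := Real.sqrt_le_sqrt h14
    have h12 : Real.sqrt (1/4 : ℝ) = 1/2 := by
      rw [show (1/4 : ℝ) = (1/2)^2 by norm_num, Real.sqrt_sq (by norm_num)]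
    linarith
  have hxi1_int : IntervalIntegrable (fun θ => xi θ + 1)
      MeasureTheory.volume (-(Real.pi/2)) (Real.pi/2) :=
    xi_intervalIntegrable.add intervalIntegrable_const
  have hg_int : IntervalIntegrable g MeasureTheory.volume (-(Real.pi/2)) (Real.pi/2) := by
    rw [hg]
    exact intervalIntegrable_const.sub (hxi1_int.const_mul C2)
  have hmono := intervalIntegral.integral_mono_on (by linarith) hg_int hf_int hptwise
  have hgval : ∫ θ in (-(Real.pi/2))..(Real.pi/2), g θ = Real.pi * (Real.sqrt a)⁻¹ := by
    rw [hg]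
    rw [intervalIntegral.integral_sub intervalIntegrable_const (hxi1_int.const_mul C2),
      intervalIntegral.integral_const_mul,
      intervalIntegral.integral_add xi_intervalIntegrable intervalIntegrable_const,
      integral_xi, intervalIntegral.integral_const, intervalIntegral.integral_const]
    simp only [smul_eq_mul, mul_one]
    ring
  rw [ge_iff_le, show Real.pi * (1-δ) ^ (-(1:ℝ)/2) = Real.pi * (Real.sqrt a)⁻¹ by
    rw [haa, rpow_neg_half_eq ha.le]]
  calc Real.pi * (Real.sqrt a)⁻¹ = ∫ θ in (-(Real.pi/2))..(Real.pi/2), g θ := hgval.symm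
    _ ≤ _ := hmono
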